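/- Let I ⊂ ℝᵈ be a bounded d-dimensional interval, Q = [0,1]ᵈ, and for b ∈ GL_d(ℝ) set N_o(b) = {s ∈ ℤᵈ : μ((bQ + bs) ∩ I) > 0 and μ((bQ + bs) ∩ Iᶜ) > 0}. Then |det b| · #N_o(b) → 0 as ‖b‖ → 0. -/

import Mathlib

open MeasureTheory Filter ENNReal
noncomputable section

/-- The cube `bQ + bs`, where `Q = [0,1]ᵈ` and `s ∈ ℤᵈ`. -/
def tile {d : ℕ} (b : Matrix (Fin d) (Fin d) ℝ) (s : Fin d → ℤ) : Set (Fin d → ℝ) :=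
  (fun x => b.mulVec (x + fun i => (s i : ℝ))) '' Set.Icc (0 : Fin d → ℝ) 1

/-- The set of `s ∈ ℤᵈ` whose cube `bQ + bs` meets both `I` and its complement
in positive measure. -/
def No {d : ℕ} (I : Set (Fin d → ℝ)) (b : Matrix (Fin d) (Fin d) ℝ) : Set (Fin d → ℤ) :=
  {s | 0 < volume (tile b s ∩ I) ∧ 0 < volume (tile b s ∩ Iᶜ)}

/-- The filter of invertible matrices whose operator norm tends to `0`. -/
def smallGL (d : ℕ) : Filter (Matrix (Fin d) (Fin d) ℝ) :=
  (Filter.comap (fun b : Matrix (Fin d) (Fin d) ℝ =>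
      ‖LinearMap.toContinuousLinearMap (Matrix.toLin' b)‖) (nhds 0)) ⊓
    Filter.principal {b | IsUnit b}

lemma tile_eq {d : ℕ} (b : Matrix (Fin d) (Fin d) ℝ) (s : Fin d → ℤ) :
    tile b s = Matrix.toLin' b ''
      Set.Icc ((0 : Fin d → ℝ) + fun i => (s i : ℝ)) (1 + fun i => (s i : ℝ)) := by
  rw [← Set.image_add_const_Icc, ← Set.image_comp]
  simp only [tile, Function.comp_def, Matrix.toLin'_apply]

lemma volume_tile {d : ℕ} (b : Matrix (Fin d) (Fin d) ℝ) (s : Fin d → ℤ) :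
    volume (tile b s) = ENNReal.ofReal |b.det| := by
  rw [tile_eq, Measure.addHaar_image_linearMap, LinearMap.det_toLin']
  rw [Real.volume_Icc_pi]
  simp

lemma volume_tile_inter {d : ℕ} {b : Matrix (Fin d) (Fin d) ℝ} (hb : IsUnit b)
    {s t : Fin d → ℤ} (hst : s ≠ t) : volume (tile b s ∩ tile b t) = 0 := by
  have hinj : Function.Injective (Matrix.toLin' b) := by
    have := Matrix.mulVec_injective_iff_isUnit.2 hb
    intro x y h
    apply this
    simpa [Matrix.toLin'_apply] using h
  rw [tile_eq, tile_eq, ← Set.image_inter hinj, Measure.addHaar_image_linearMap,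
    Set.Icc_inter_Icc, Real.volume_Icc_pi]
  obtain ⟨i, hi⟩ := Function.ne_iff.1 hst
  rw [Finset.prod_eq_zero (Finset.mem_univ i), mul_zero]
  rw [ENNReal.ofReal_eq_zero]
  have h1 : ((1 + fun j => ((s j : ℝ))) ⊓ (1 + fun j => ((t j : ℝ)))) i
      = min (1 + (s i : ℝ)) (1 + (t i : ℝ)) := rfl
  have h2 : ((fun j => ((s j : ℝ))) ⊔ (fun j => ((t j : ℝ)))) i
      = max ((s i : ℝ)) ((t i : ℝ)) := rfl
  simp only [Pi.add_apply, Pi.zero_apply, zero_add, h1, h2]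
  rcases (Ne.lt_or_gt hi) with h | h
  · have : (s i : ℝ) + 1 ≤ (t i : ℝ) := by exact_mod_cast h
    have := min_le_left (1 + (s i : ℝ)) (1 + (t i : ℝ))
    have := le_max_right ((s i : ℝ)) ((t i : ℝ))
    nlinarith [min_le_left (1 + (s i : ℝ)) (1 + (t i : ℝ)),
      le_max_right ((s i : ℝ)) ((t i : ℝ))]
  · have : (t i : ℝ) + 1 ≤ (s i : ℝ) := by exact_mod_cast h
    nlinarith [min_le_right (1 + (s i : ℝ)) (1 + (t i : ℝ)),
      le_max_left ((s i : ℝ)) ((t i : ℝ))]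

lemma tile_dist {d : ℕ} {b : Matrix (Fin d) (Fin d) ℝ} {s : Fin d → ℤ} {y z : Fin d → ℝ}
    (hy : y ∈ tile b s) (hz : z ∈ tile b s) (i : Fin d) :
    |y i - z i| ≤ ‖LinearMap.toContinuousLinearMap (Matrix.toLin' b)‖ := by
  obtain ⟨x, hx, rfl⟩ := hy
  obtain ⟨x', hx', rfl⟩ := hz
  set f := LinearMap.toContinuousLinearMap (Matrix.toLin' b) with hf
  have h1 : (b.mulVec (x + fun i => ((s i : ℝ)))) - (b.mulVec (x' + fun i => ((s i : ℝ))))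
      = f (x - x') := by
    simp only [hf, LinearMap.coe_toContinuousLinearMap', Matrix.toLin'_apply,
      ← Matrix.mulVec_sub]
    abel_nf
  have h2 : ‖x - x'‖ ≤ 1 := by
    rw [pi_norm_le_iff_of_nonneg zero_le_one]
    intro j
    rw [Pi.sub_apply, Real.norm_eq_abs, abs_sub_le_iff]
    have h0x := hx.1 j; have h1x := hx.2 j; have h0x' := hx'.1 j; have h1x' := hx'.2 j
    simp only [Pi.one_apply, Pi.zero_apply] at h0x h1x h0x' h1x'
    constructor <;> linarith
  calc |(b.mulVec (x + fun i => ((s i : ℝ)))) i - (b.mulVec (x' + fun i => ((s i : ℝ)))) i|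
      = ‖((b.mulVec (x + fun i => ((s i : ℝ)))) - (b.mulVec (x' + fun i => ((s i : ℝ))))) i‖ := by
        rw [Pi.sub_apply, Real.norm_eq_abs]
    _ ≤ ‖(b.mulVec (x + fun i => ((s i : ℝ)))) - (b.mulVec (x' + fun i => ((s i : ℝ))))‖ :=
        norm_le_pi_norm _ i
    _ = ‖f (x - x')‖ := by rw [h1]
    _ ≤ ‖f‖ * ‖x - x'‖ := f.le_opNorm _
    _ ≤ ‖f‖ * 1 := by
        exact mul_le_mul_of_nonneg_left h2 (norm_nonneg f)
    _ = ‖f‖ := mul_one _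

lemma box_bound {d : ℕ} (l u : Fin d → ℝ) {ε : ℝ}
    (lo hi : Fin d → ℝ) (i : Fin d) (hii : hi i - lo i ≤ 2 * ε)
    (hothers : ∀ j, hi j - lo j ≤ u j - l j + 2) (hK : ∀ j, (2:ℝ) ≤ u j - l j + 2) :
    volume (Set.univ.pi fun j => Set.Icc (lo j) (hi j)) ≤
      ENNReal.ofReal (2 * ε) * ∏ j, ENNReal.ofReal (u j - l j + 2) := by
  rw [Set.pi_univ_Icc, Real.volume_Icc_pi,
    ← Finset.mul_prod_erase Finset.univ _ (Finset.mem_univ i)]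
  refine mul_le_mul' (ENNReal.ofReal_le_ofReal hii) ?_
  calc ∏ j ∈ Finset.univ.erase i, ENNReal.ofReal (hi j - lo j)
      ≤ ∏ j ∈ Finset.univ.erase i, ENNReal.ofReal (u j - l j + 2) :=
        Finset.prod_le_prod' fun j _ => ENNReal.ofReal_le_ofReal (hothers j)
    _ ≤ ∏ j, ENNReal.ofReal (u j - l j + 2) :=
        Finset.prod_le_prod_of_subset_of_one_le' (Finset.subset_univ _)
          (fun j _ _ => by
            rw [ENNReal.one_le_ofReal]
            linarith [hK j])

lemma key {d : ℕ} (l u : Fin d → ℝ) (hlu : ∀ i, l i < u i)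
    {b : Matrix (Fin d) (Fin d) ℝ} (hb : IsUnit b)
    (hε1 : ‖LinearMap.toContinuousLinearMap (Matrix.toLin' b)‖ ≤ 1) :
    |b.det| * ((No (Set.univ.pi fun i => Set.Ioo (l i) (u i)) b).ncard : ℝ) ≤
      ((d : ℝ) * (4 * ∏ j, (u j - l j + 2))) *
        ‖LinearMap.toContinuousLinearMap (Matrix.toLin' b)‖ := by
  set ε := ‖LinearMap.toContinuousLinearMap (Matrix.toLin' b)‖ with hεdef
  have hε0 : 0 ≤ ε := norm_nonneg _
  set K : ℝ := ∏ j, (u j - l j + 2) with hKdef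
  have hKj : ∀ j, (2:ℝ) ≤ u j - l j + 2 := fun j => by linarith [hlu j]
  have hKpos : 0 < K := Finset.prod_pos fun j _ => by linarith [hlu j]
  set I : Set (Fin d → ℝ) := Set.univ.pi fun i => Set.Ioo (l i) (u i) with hIdef
  by_cases hfin : (No I b).Finite
  swap
  · rw [Set.Infinite.ncard hfin]
    have : (0:ℝ) ≤ (d : ℝ) * (4 * K) * ε := by positivity
    simpa using this
  -- the ε-boundary region
  set A : Fin d → Set (Fin d → ℝ) := fun i =>
    Set.univ.pi fun j => Set.Icc (l j - ε) (if j = i then l j + ε else u j + ε) with hA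
  set B : Fin d → Set (Fin d → ℝ) := fun i =>
    Set.univ.pi fun j => Set.Icc (if j = i then u j - ε else l j - ε) (u j + ε) with hB
  -- tiles of No lie in the boundary region
  have hsub : ∀ s ∈ No I b, tile b s ⊆ ⋃ i, (A i ∪ B i) := by
    intro s hs y hy
    obtain ⟨p, hpT, hpI⟩ := nonempty_of_measure_ne_zero hs.1.ne'
    obtain ⟨q, hqT, hqI⟩ := nonempty_of_measure_ne_zero hs.2.ne'
    have hdp := fun j => tile_dist hy hpT j
    have hdq := fun j => tile_dist hy hqT j
    simp only [hIdef, Set.mem_pi, Set.mem_univ, Set.mem_Ioo, forall_true_left] at hpI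
    have hqI' : ∃ i, q i ≤ l i ∨ u i ≤ q i := by
      by_contra hcon
      push_neg at hcon
      exact hqI fun i _ => ⟨(hcon i).1, (hcon i).2⟩
    obtain ⟨i, hi⟩ := hqI'
    have hlow : ∀ j, l j - ε ≤ y j := by
      intro j
      have := abs_sub_le_iff.1 (hdp j)
      linarith [(hpI j).1]
    have hhigh : ∀ j, y j ≤ u j + ε := by
      intro j
      have := abs_sub_le_iff.1 (hdp j)
      linarith [(hpI j).2]
    refine Set.mem_iUnion.2 ⟨i, ?_⟩
    rcases hi with hi | hi
    · left
      refine Set.mem_pi.2 fun j _ => ?_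
      refine ⟨hlow j, ?_⟩
      by_cases hj : j = i
      · subst hj
        have := abs_sub_le_iff.1 (hdq j)
        rw [if_pos rfl]
        linarith
      · rw [if_neg hj]; exact hhigh j
    · right
      refine Set.mem_pi.2 fun j _ => ?_
      refine ⟨?_, hhigh j⟩
      by_cases hj : j = i
      · subst hj
        have := abs_sub_le_iff.1 (hdq j)
        rw [if_pos rfl]
        linarith
      · rw [if_neg hj]; exact hlow j
  -- measure bounds on A i and B i
  have hAB : ∀ i, volume (A i) ≤ ENNReal.ofReal (2*ε) * ∏ j, ENNReal.ofReal (u j - l j + 2) ∧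
      volume (B i) ≤ ENNReal.ofReal (2*ε) * ∏ j, ENNReal.ofReal (u j - l j + 2) := by
    intro i
    constructor
    · refine box_bound l u _ _ i ?_ ?_ hKj
      · rw [if_pos rfl]; ring_nf; exact le_rfl
      · intro j
        by_cases hj : j = i
        · subst hj; rw [if_pos rfl]; linarith [hlu j]
        · rw [if_neg hj]; linarith
    · refine box_bound l u _ _ i ?_ ?_ hKj
      · rw [if_pos rfl]; ring_nf; exact le_rfl
      · intro j
        by_cases hj : j = i
        · subst hj; rw [if_pos rfl]; linarith [hlu j]
        · rw [if_neg hj]; linarith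
  have hS : volume (⋃ i, (A i ∪ B i)) ≤
      (d : ℝ≥0∞) * (2 * (ENNReal.ofReal (2*ε) * ∏ j, ENNReal.ofReal (u j - l j + 2))) := by
    calc volume (⋃ i, (A i ∪ B i)) ≤ ∑' i, volume (A i ∪ B i) := measure_iUnion_le _
      _ = ∑ i, volume (A i ∪ B i) := tsum_fintype _
      _ ≤ ∑ _i : Fin d, (2 * (ENNReal.ofReal (2*ε) * ∏ j, ENNReal.ofReal (u j - l j + 2))) := by
          refine Finset.sum_le_sum fun i _ => ?_
          refine (measure_union_le _ _).trans ?_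
          rw [two_mul]
          exact add_le_add (hAB i).1 (hAB i).2
      _ = (d : ℝ≥0∞) * (2 * (ENNReal.ofReal (2*ε) * ∏ j, ENNReal.ofReal (u j - l j + 2))) := by
          rw [Finset.sum_const, Finset.card_univ, Fintype.card_fin, nsmul_eq_mul]
  -- tiles are a.e. disjoint with measure |det b| each
  set F := hfin.toFinset with hF
  have hmeas : ∀ s : Fin d → ℤ, MeasurableSet (tile b s) := by
    intro s
    have hcont : Continuous fun x : Fin d → ℝ => b.mulVec (x + fun i => ((s i : ℝ))) := by
      have h1 : Continuous fun x : Fin d → ℝ => b.mulVec x := by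
        have := LinearMap.continuous_of_finiteDimensional (Matrix.mulVecLin b)
        simpa [Matrix.coe_mulVecLin] using this
      exact h1.comp (continuous_id.add continuous_const)
    exact ((isCompact_Icc.image hcont).isClosed).measurableSet
  have hsum : volume (⋃ s ∈ F, tile b s) = ∑ s ∈ F, volume (tile b s) := by
    refine measure_biUnion_finset₀ ?_ fun s _ => (hmeas s).nullMeasurableSet
    intro s _ t _ hst
    exact volume_tile_inter hb hst
  have hcard : (No I b).ncard = F.card := Set.ncard_eq_toFinset_card _ hfin
  have hchain : ENNReal.ofReal (|b.det| * ((No I b).ncard : ℝ)) ≤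
      ENNReal.ofReal ((d : ℝ) * (4 * K) * ε) := by
    have h1 : ENNReal.ofReal (|b.det| * ((No I b).ncard : ℝ)) = ∑ s ∈ F, volume (tile b s) := by
      rw [ENNReal.ofReal_mul (abs_nonneg _)]
      rw [Finset.sum_congr rfl fun s _ => volume_tile b s, Finset.sum_const, nsmul_eq_mul]
      rw [hcard, ENNReal.ofReal_natCast, mul_comm]
    rw [h1, ← hsum]
    have h2 : (⋃ s ∈ F, tile b s) ⊆ ⋃ i, (A i ∪ B i) := by
      refine Set.iUnion₂_subset fun s hsF => hsub s ?_
      rwa [hfin.mem_toFinset] at hsF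
    refine ((measure_mono h2).trans hS).trans ?_
    have hKE : ∏ j, ENNReal.ofReal (u j - l j + 2) = ENNReal.ofReal K := by
      rw [hKdef, ENNReal.ofReal_prod_of_nonneg fun j _ => by linarith [hKj j]]
    rw [hKE, ← ENNReal.ofReal_mul (by positivity : (0:ℝ) ≤ 2*ε)]
    have h2' : (2 : ℝ≥0∞) = ENNReal.ofReal 2 := by simp
    rw [h2', ← ENNReal.ofReal_mul (by norm_num : (0:ℝ) ≤ 2)]
    rw [← ENNReal.ofReal_natCast d, ← ENNReal.ofReal_mul (Nat.cast_nonneg d)]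
    refine ENNReal.ofReal_le_ofReal ?_
    nlinarith [hε0, hKpos.le, Nat.cast_nonneg (α := ℝ) d]
  exact (ENNReal.ofReal_le_ofReal_iff (by positivity)).1 hchain

/-- For a bounded nondegenerate `d`-dimensional interval `I`,
`|det b| · #N_o(b) → 0` as the operator norm of the invertible `b` tends to `0`. -/
theorem det_mul_card_No_tendsto_zero {d : ℕ} (l u : Fin d → ℝ) (hlu : ∀ i, l i < u i) :
    Tendsto
      (fun b : Matrix (Fin d) (Fin d) ℝ =>
        |b.det| * ((No (Set.univ.pi fun i => Set.Ioo (l i) (u i)) b).ncard : ℝ))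
      (smallGL d) (nhds 0) := by
  set C : ℝ := (d : ℝ) * (4 * ∏ j, (u j - l j + 2)) with hC
  have hnorm : Tendsto (fun b : Matrix (Fin d) (Fin d) ℝ =>
      ‖LinearMap.toContinuousLinearMap (Matrix.toLin' b)‖) (smallGL d) (nhds 0) :=
    tendsto_comap.mono_left inf_le_left
  have hunit : ∀ᶠ b in smallGL d, IsUnit b := by
    have : ∀ᶠ b in 𝓟 {b : Matrix (Fin d) (Fin d) ℝ | IsUnit b}, IsUnit b :=
      eventually_principal.2 fun _ h => h
    exact this.filter_mono inf_le_right
  have hsmall : ∀ᶠ b in smallGL d,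
      ‖LinearMap.toContinuousLinearMap (Matrix.toLin' b)‖ ≤ 1 :=
    hnorm.eventually (eventually_le_nhds one_pos)
  refine squeeze_zero' (Eventually.of_forall fun b => by positivity) ?_
    (g := fun b => C * ‖LinearMap.toContinuousLinearMap (Matrix.toLin' b)‖) ?_
  · filter_upwards [hunit, hsmall] with b hb hb1
    exact key l u hlu hb hb1
  · simpa using hnorm.const_mul C
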